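/- Identity for the Darcy-side Robin update: if η_D' = η_S + (δ_f + δ_p) v, and the energy identity E + δ_f ‖v‖² = -⟨η_S, v⟩ holds with E ≥ 0, then ‖η_D'‖² = ‖η_S‖² - 2(δ_f + δ_p) E + (δ_p² - δ_f²)‖v‖². -/
import Mathlib


open RealInnerProductSpace

/-- Identity for the Darcy-side Robin update: with
`η_D' = η_S + (δ_f + δ_p) v` and the energy identity
`E + δ_f ‖v‖² = -⟨η_S, v⟩`, one has
`‖η_D'‖² = ‖η_S‖² - 2(δ_f + δ_p) E + (δ_p² - δ_f²)‖v‖²`. -/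
theorem stmt_12 {H : Type*} [NormedAddCommGroup H] [InnerProductSpace ℝ H]
    (ηS v : H) (δf δp E : ℝ) (hδf : 0 < δf) (hδp : 0 < δp) (hE : 0 ≤ E)
    (henergy : E + δf * ‖v‖ ^ 2 = -⟪ηS, v⟫)
    (ηD' : H) (hdef : ηD' = ηS + (δf + δp) • v) :
    ‖ηD'‖ ^ 2 =
      ‖ηS‖ ^ 2 - 2 * (δf + δp) * E + (δp ^ 2 - δf ^ 2) * ‖v‖ ^ 2 := by
  subst hdef
  have h := norm_add_sq_real ηS ((δf + δp) • v)
  rw [real_inner_smul_right, norm_smul, Real.norm_eq_abs] at h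
  have habs : |δf + δp| = δf + δp := abs_of_pos (by linarith)
  rw [habs] at h
  nlinarith [h]
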